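/- arXiv:2108.11322 — 3 statements merged into one kernel-verified Lean document; each statement's English description precedes it below -/
import Mathlib

section
/- Let p > 2 be a prime, n ≥ 1, and γ an integer with γ ≡ 1 (mod p). Define f_γ(δ) = Σ_{i=0}^{δ-1} γ^i. Then for natural numbers δ₁, δ₂ one has f_γ(δ₁) ≡ f_γ(δ₂) (mod p^n) if and only if δ₁ ≡ δ₂ (mod p^n). -/
open Finset

lemma key_dvd (p : ℕ) (hp : p.Prime) (hp2 : 2 < p) (n : ℕ)
    (γ : ℤ) (hγ : (p : ℤ) ∣ γ - 1) (d : ℕ) :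
    (p : ℤ) ^ n ∣ (∑ i ∈ Finset.range d, γ ^ i) ↔ (p : ℤ) ^ n ∣ (d : ℤ) := by
  have hpI : Prime (p : ℤ) := Nat.prime_iff_prime_int.1 hp
  by_cases h1 : γ = 1
  · subst h1; simp
  · have hne : γ - 1 ≠ 0 := sub_ne_zero.2 h1
    have hpγ : ¬ (p : ℤ) ∣ γ := by
      intro h
      have : (p : ℤ) ∣ 1 := by simpa using dvd_sub h hγ
      exact hpI.not_isUnit (isUnit_of_dvd_one this)
    have hodd : Odd p := hp.odd_of_ne_two (by omega)
    have hLTE := Int.emultiplicity_pow_sub_pow hp hodd (by simpa using hγ) hpγ d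
    simp only [one_pow] at hLTE
    have hgeom : (∑ i ∈ Finset.range d, γ ^ i) * (γ - 1) = γ ^ d - 1 := geom_sum_mul γ d
    have hmul : emultiplicity (p : ℤ) (γ ^ d - 1) =
        emultiplicity (p : ℤ) (∑ i ∈ Finset.range d, γ ^ i) + emultiplicity (p : ℤ) (γ - 1) := by
      rw [← hgeom, emultiplicity_mul hpI]
    have hfin : emultiplicity (p : ℤ) (γ - 1) ≠ ⊤ := by
      rw [← finiteMultiplicity_iff_emultiplicity_ne_top, Int.finiteMultiplicity_iff]
      exact ⟨by simpa using hp.ne_one, hne⟩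
    have hkey : emultiplicity (p : ℤ) (∑ i ∈ Finset.range d, γ ^ i) = emultiplicity p d := by
      have := hmul.symm.trans hLTE
      rw [add_comm (emultiplicity (p:ℤ) (γ-1))] at this
      exact WithTop.add_right_cancel hfin this
    rw [pow_dvd_iff_le_emultiplicity, hkey, ← pow_dvd_iff_le_emultiplicity]
    exact_mod_cast Int.natCast_dvd_natCast.symm

theorem stmt_0 (p : ℕ) (hp : p.Prime) (hp2 : 2 < p) (n : ℕ) (hn : 1 ≤ n)
    (γ : ℤ) (hγ : γ ≡ 1 [ZMOD p]) (δ₁ δ₂ : ℕ) :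
    (∑ i ∈ Finset.range δ₁, γ ^ i) ≡ (∑ i ∈ Finset.range δ₂, γ ^ i) [ZMOD p ^ n] ↔
      (δ₁ : ℤ) ≡ (δ₂ : ℤ) [ZMOD p ^ n] := by
  have hdvd : (p : ℤ) ∣ γ - 1 := by
    have := (Int.ModEq.dvd hγ)
    exact (dvd_sub_comm).mp this
  have hpI : Prime (p : ℤ) := Nat.prime_iff_prime_int.1 hp
  have hpγ : ¬ (p : ℤ) ∣ γ := by
    intro h
    have : (p : ℤ) ∣ 1 := by simpa using dvd_sub h hdvd
    exact hpI.not_isUnit (isUnit_of_dvd_one this)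
  wlog hle : δ₂ ≤ δ₁ generalizing δ₁ δ₂
  · rw [Int.modEq_comm, @Int.modEq_comm _ (δ₁ : ℤ)]
    exact this δ₂ δ₁ (le_of_not_ge hle)
  obtain ⟨d, rfl⟩ := Nat.exists_eq_add_of_le hle
  rw [Int.modEq_comm, Int.modEq_iff_dvd, Int.modEq_comm, Int.modEq_iff_dvd]
  have hsplit : (∑ i ∈ Finset.range (δ₂ + d), γ ^ i) - (∑ i ∈ Finset.range δ₂, γ ^ i)
      = γ ^ δ₂ * ∑ i ∈ Finset.range d, γ ^ i := by
    rw [Finset.sum_range_add]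
    simp only [pow_add, Finset.mul_sum]
    ring
  push_cast
  rw [hsplit, show ((δ₂ : ℤ) + d - δ₂) = (d : ℤ) by ring]
  have hcop : IsCoprime ((p : ℤ) ^ n) (γ ^ δ₂) :=
    ((hpI.coprime_iff_not_dvd.2 hpγ).pow : IsCoprime ((p:ℤ)^n) (γ^δ₂))
  constructor
  · intro h
    exact (key_dvd p hp hp2 n γ hdvd d).mp (hcop.dvd_of_dvd_mul_left h)
  · intro h
    exact Dvd.dvd.mul_left ((key_dvd p hp hp2 n γ hdvd d).mpr h) _
end

section
/- Let p be an odd prime and b an integer with b^{p^m} ≡ 1 (mod p^n), where n ≥ 1. Then p^m divides f_b(p^m) = Σ_{i=0}^{p^m - 1} b^i, but p^{m+1} does not divide f_b(p^m). -/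
private lemma decomp (x : ℤ) (a c : ℕ) :
    ∑ i ∈ Finset.range (a * c), x ^ i =
      (∑ i ∈ Finset.range a, x ^ i) * ∑ j ∈ Finset.range c, (x ^ a) ^ j := by
  induction c with
  | zero => simp
  | succ c ih =>
      rw [Nat.mul_succ, Finset.sum_range_add, ih, Finset.sum_range_succ, mul_add]
      congr 1
      rw [Finset.sum_mul]
      refine Finset.sum_congr rfl fun i _ => ?_
      rw [pow_add, pow_mul, mul_comm]

private lemma geomP (p : ℕ) (hp : p.Prime) (hodd : Odd p) (c : ℤ)
    (hc : (p : ℤ) ∣ c - 1) : (p : ℤ) ^ 2 ∣ (∑ i ∈ Finset.range p, c ^ i) - p := by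
  have key : (∑ i ∈ Finset.range p, c ^ i) - p =
      (∑ i ∈ Finset.range p, ∑ j ∈ Finset.range i, c ^ j) * (c - 1) := by
    rw [Finset.sum_mul]
    have : ((p : ℤ)) = ∑ i ∈ Finset.range p, (1 : ℤ) := by simp
    rw [this, ← Finset.sum_sub_distrib]
    refine Finset.sum_congr rfl fun i _ => ?_
    rw [geom_sum_mul]
  rw [key, sq]
  refine mul_dvd_mul ?_ hc
  -- p ∣ double sum
  obtain ⟨t, ht⟩ := hodd
  have h2 : (p : ℤ) ∣ ∑ i ∈ Finset.range p, (i : ℤ) := by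
    have h := Finset.sum_range_id_mul_two p
    have hcast : ((∑ i ∈ Finset.range p, i : ℕ) : ℤ) = ∑ i ∈ Finset.range p, (i : ℤ) := by
      push_cast; rfl
    have hps : (p : ℤ) = 2 * t + 1 := by exact_mod_cast ht
    have h' : (∑ i ∈ Finset.range p, (i : ℤ)) * 2 = (p : ℤ) * ((p : ℤ) - 1) := by
      have hI := congrArg (Nat.cast : ℕ → ℤ) h
      rw [Nat.cast_mul, Nat.cast_mul, Nat.cast_sub hp.one_lt.le, hcast] at hI
      simpa using hI
    exact ⟨t, by nlinarith⟩
  have h3 : (p : ℤ) ∣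
      (∑ i ∈ Finset.range p, ∑ j ∈ Finset.range i, c ^ j) - ∑ i ∈ Finset.range p, (i : ℤ) := by
    rw [← Finset.sum_sub_distrib]
    refine Finset.dvd_sum fun i _ => ?_
    have : (i : ℤ) = ∑ j ∈ Finset.range i, (1 : ℤ) := by simp
    rw [this, ← Finset.sum_sub_distrib]
    refine Finset.dvd_sum fun j _ => ?_
    have : c ^ j - 1 = (∑ k ∈ Finset.range j, c ^ k) * (c - 1) := (geom_sum_mul c j).symm
    rw [this]
    exact Dvd.dvd.mul_left hc _
  obtain ⟨u, hu⟩ := h3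
  obtain ⟨v, hv⟩ := h2
  exact ⟨u + v, by linarith⟩

private lemma main_lem (p : ℕ) (hp : p.Prime) (hodd : Odd p) (b : ℤ)
    (hb1 : (p : ℤ) ∣ b - 1) (m : ℕ) :
    ∃ k : ℤ, ∑ i ∈ Finset.range (p ^ m), b ^ i = (p : ℤ) ^ m * (1 + p * k) := by
  induction m with
  | zero => exact ⟨0, by simp⟩
  | succ m ih =>
      obtain ⟨k, hk⟩ := ih
      have hc1 : b ≡ 1 [ZMOD (p : ℤ)] := (Int.modEq_iff_dvd.2 hb1).symm
      have h0 : b ^ (p ^ m) ≡ 1 [ZMOD (p : ℤ)] := by simpa using hc1.pow (p ^ m)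
      have hbp : (p : ℤ) ∣ b ^ (p ^ m) - 1 := Int.modEq_iff_dvd.1 h0.symm
      obtain ⟨t, ht⟩ := geomP p hp hodd (b ^ (p ^ m)) hbp
      have hdec : ∑ i ∈ Finset.range (p ^ (m + 1)), b ^ i =
          (∑ i ∈ Finset.range (p ^ m), b ^ i) *
            ∑ j ∈ Finset.range p, (b ^ (p ^ m)) ^ j := by
        rw [pow_succ, decomp]
      refine ⟨k + t + p * (k * t), ?_⟩
      have hsum : (∑ j ∈ Finset.range p, (b ^ (p ^ m)) ^ j) = (p : ℤ) * (1 + p * t) := by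
        have h : (∑ j ∈ Finset.range p, (b ^ (p ^ m)) ^ j) = (p : ℤ) + (p : ℤ) ^ 2 * t := by
          linarith
        rw [h]; ring
      rw [hdec, hk, hsum, pow_succ]
      ring

theorem stmt_1 (p : ℕ) (hp : p.Prime) (hodd : Odd p) (m n : ℕ) (hn : 1 ≤ n)
    (b : ℤ) (hb : b ^ (p ^ m) ≡ 1 [ZMOD p ^ n]) :
    ((p : ℤ) ^ m ∣ ∑ i ∈ Finset.range (p ^ m), b ^ i) ∧
      ¬ ((p : ℤ) ^ (m + 1) ∣ ∑ i ∈ Finset.range (p ^ m), b ^ i) := by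
  haveI : Fact p.Prime := ⟨hp⟩
  have hpn : ((p : ℤ)) ∣ (p : ℤ) ^ n := dvd_pow_self _ (by omega)
  have hb' : (p : ℤ) ∣ 1 - b ^ (p ^ m) := dvd_trans (by exact_mod_cast hpn) hb.dvd
  have hb1 : (p : ℤ) ∣ b - 1 := by
    have hz : ((b : ZMod p)) ^ (p ^ m) = 1 := by
      have : ((1 - b ^ (p ^ m) : ℤ) : ZMod p) = 0 :=
        (ZMod.intCast_zmod_eq_zero_iff_dvd _ _).2 hb'
      push_cast at this
      linear_combination -this
    rw [ZMod.pow_card_pow] at hz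
    have : ((b - 1 : ℤ) : ZMod p) = 0 := by push_cast [hz]; ring
    exact (ZMod.intCast_zmod_eq_zero_iff_dvd _ _).1 this
  obtain ⟨k, hk⟩ := main_lem p hp hodd b hb1 m
  constructor
  · exact ⟨1 + p * k, hk⟩
  · intro hdvd
    rw [hk, pow_succ] at hdvd
    have hpm : ((p : ℤ)) ^ m ≠ 0 := pow_ne_zero _ (by exact_mod_cast hp.pos.ne')
    have hpd : (p : ℤ) ∣ 1 + p * k :=
      (mul_dvd_mul_iff_left hpm).1 hdvd
    have h1 : (p : ℤ) ∣ 1 := (dvd_add_right ⟨k, rfl⟩).1 (by rwa [add_comm] at hpd)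
    have := Int.le_of_dvd one_pos h1
    have := hp.one_lt
    omega
end

section
/- Let N be an odd positive integer whose radical R(N) (the product of its distinct prime divisors) is a Burnside number, i.e., gcd(R(N), φ(R(N))) = 1. Let p be a prime dividing N with p^α || N, and let b be a unit in ℤ/p^αℤ with b^m = 1 for some m dividing N. Then b^{p^{α-1}} = 1. -/
/-- The radical of `n`: the product of its distinct prime divisors. -/
def Nat.rad (n : ℕ) : ℕ := n.primeFactors.prod id

theorem stmt_15 (N : ℕ) (hN : 0 < N) (hodd : Odd N)
    (hBurnside : Nat.Coprime N.rad (Nat.totient N.rad))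
    (p : ℕ) (hp : p.Prime) (hpN : p ∣ N) (α : ℕ) (hα : α = N.factorization p)
    (b : (ZMod (p ^ α))ˣ) (m : ℕ) (hm : m ∣ N) (hb : b ^ m = 1) :
    b ^ (p ^ (α - 1)) = 1 := by
  haveI : Fact p.Prime := ⟨hp⟩
  haveI : NeZero (p ^ α) := ⟨pow_ne_zero _ hp.pos.ne'⟩
  have hα1 : 1 ≤ α := by
    rw [hα]; exact hp.factorization_pos_of_dvd hN.ne' hpN
  -- order of b divides p^(α-1) * (p-1)
  have hcard : orderOf b ∣ p ^ (α - 1) * (p - 1) := by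
    have h := orderOf_dvd_card (x := b)
    rwa [ZMod.card_units_eq_totient, Nat.totient_prime_pow hp (by omega)] at h
  have hdN : orderOf b ∣ N := (orderOf_dvd_of_pow_eq_one hb).trans hm
  -- p - 1 divides totient of rad N
  have hpr : p ∈ N.primeFactors := Nat.mem_primeFactors.2 ⟨hp, hpN, hN.ne'⟩
  have hsplit : N.rad = p * ∏ q ∈ N.primeFactors.erase p, q := by
    simp only [Nat.rad, id]; rw [← Finset.mul_prod_erase _ _ hpr]
  have hcop : Nat.Coprime p (∏ q ∈ N.primeFactors.erase p, q) := by
    apply Nat.Coprime.prod_right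
    intro q hq
    have hq' := Finset.mem_erase.1 hq
    exact (Nat.coprime_primes hp (Nat.prime_of_mem_primeFactors hq'.2)).2 hq'.1.symm
  have hdvdtot : p - 1 ∣ (N.rad).totient := by
    rw [hsplit, Nat.totient_mul hcop, Nat.totient_prime hp]
    exact Dvd.intro _ rfl
  -- N is coprime to totient (rad N)
  have hNtot : Nat.Coprime N (N.rad).totient := by
    have hrad : (N.rad).primeFactors = N.primeFactors :=
      Nat.primeFactors_prod fun q hq => Nat.prime_of_mem_primeFactors hq
    have htot0 : (N.rad).totient ≠ 0 := by
      refine Nat.totient_pos.2 (Nat.pos_of_ne_zero ?_) |>.ne'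
      rw [Nat.rad]
      exact Finset.prod_ne_zero_iff.2 fun q hq => (Nat.prime_of_mem_primeFactors hq).pos.ne'
    rw [← Nat.disjoint_primeFactors hN.ne' htot0, ← hrad]
    exact (Nat.disjoint_primeFactors (by
      rw [Nat.rad]
      exact Finset.prod_ne_zero_iff.2 fun q hq => (Nat.prime_of_mem_primeFactors hq).pos.ne')
      htot0).2 hBurnside
  -- hence orderOf b is coprime to p - 1
  have hcop2 : Nat.Coprime (orderOf b) (p - 1) :=
    Nat.Coprime.coprime_dvd_right hdvdtot (Nat.Coprime.coprime_dvd_left hdN hNtot)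
  exact orderOf_dvd_iff_pow_eq_one.1 (hcop2.dvd_of_dvd_mul_right hcard)
end
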